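/- In SSynch with non-rigid movements with parameter δ > 0, two finite-state robots knowing δ and running the 3-state algorithm below, both starting in state A, solve Rendezvous from every pair of initial positions in ℝ², under every fair schedule and every adversarial choice of stopping points. In particular, Rendezvous of two finite-state robots in non-rigid SSynch with knowledge of δ is solvable with three internal states. -/

import Mathlib

/-- Points in the plane. -/
abbrev Pt := EuclideanSpace ℝ (Fin 2)

/-- The three internal states. -/
inductive StABC | A | B | C
deriving DecidableEq

/-- A configuration of two finite-state robots: positions and internal states
(robot `r` is `false`, robot `s` is `true`); each robot sees only its own
state. -/
structure ConfigFS where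
  pos : Bool → Pt
  st : Bool → StABC

/-- The 3-state algorithm with knowledge of `δ`, for a robot in internal state
`s` at position `p` seeing the other robot at `q` (both robots measure true
Euclidean distances, `d = ‖q - p‖`): returns the new internal state and the
destination. If `d = 0`: keep the state and stay. State `A`: if `d < δ/2`,
keep `A` and move to the point at distance `δ/2` from the other robot, on the
far side; if `δ/2 ≤ d < δ`, switch to `B` and move to `q`; if `d ≥ δ`, keep
`A` and move to the point at distance `δ/4` before the midpoint. State `B`:
if `δ/2 ≤ d < δ`, switch to `C` and move to the midpoint; otherwise keep `B`
and stay. State `C`: keep `C` and move to `q`. -/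
noncomputable def algo16 (δ : ℝ) (s : StABC) (p q : Pt) : StABC × Pt :=
  let d := ‖q - p‖
  if d = 0 then (s, p)
  else match s with
  | .A =>
      if d < δ / 2 then (.A, p + (1 - δ / (2 * d)) • (q - p))
      else if d < δ then (.B, q)
      else (.A, p + (1/2 - δ / (4 * d)) • (q - p))
  | .B =>
      if δ / 2 ≤ d ∧ d < δ then (.C, p + (1/2 : ℝ) • (q - p))
      else (.B, p)
  | .C => (.C, q)

/-- One SSynch round with non-rigid movements with parameter `δ`: each
activated robot `i` (those with `act i = true`) simultaneously observes the
other robot's position, computes its new internal state and destination, and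
moves along the straight segment toward the destination, stopping at an
adversarially chosen point that either is the destination or lies at distance
at least `δ` from its starting point; non-activated robots do nothing. -/
def StepFS (δ : ℝ) (act : Bool → Bool) (c c' : ConfigFS) : Prop :=
  ∀ i : Bool,
    (act i = true →
      c'.st i = (algo16 δ (c.st i) (c.pos i) (c.pos (!i))).1 ∧
      c'.pos i ∈ segment ℝ (c.pos i) (algo16 δ (c.st i) (c.pos i) (c.pos (!i))).2 ∧
      (c'.pos i = (algo16 δ (c.st i) (c.pos i) (c.pos (!i))).2 ∨
        δ ≤ ‖c'.pos i - c.pos i‖)) ∧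
    (act i = false → c'.pos i = c.pos i ∧ c'.st i = c.st i)

/-- A legal fair SSynch schedule: at every round a nonempty set of robots is
activated, and each robot is activated infinitely often. -/
def FairSched (sched : ℕ → Bool → Bool) : Prop :=
  (∀ n, sched n false = true ∨ sched n true = true) ∧
  (∀ i n, ∃ m, n ≤ m ∧ sched m i = true)

/-- Rendezvous is solved: from some round on, the two robots occupy the same
point and never move again. -/
def SolvesFS (exec : ℕ → ConfigFS) : Prop :=
  ∃ N : ℕ, ∀ n, N ≤ n → ∀ i, (exec n).pos i = (exec N).pos false

namespace Rdv

lemma seg_char {p y x : Pt} (h : x ∈ segment ℝ p y) :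
    ∃ θ : ℝ, 0 ≤ θ ∧ θ ≤ 1 ∧ x = p + θ • (y - p) := by
  rw [segment_eq_image'] at h
  obtain ⟨θ, hθ, hx⟩ := h
  exact ⟨θ, hθ.1, hθ.2, hx.symm⟩

lemma rigid {δ : ℝ} {p y x : Pt} (hlen : ‖y - p‖ < δ)
    (hseg : x ∈ segment ℝ p y) (hstop : x = y ∨ δ ≤ ‖x - p‖) : x = y := by
  obtain ⟨θ, h0, h1, rfl⟩ := seg_char hseg
  rcases hstop with h | h
  · exact h
  · exfalso
    have hn : ‖p + θ • (y - p) - p‖ = θ * ‖y - p‖ := by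
      rw [add_sub_cancel_left, norm_smul, Real.norm_eq_abs, abs_of_nonneg h0]
    nlinarith [norm_nonneg (y - p)]

lemma algo16_zero {δ : ℝ} {s : StABC} {p q : Pt} (h : ‖q - p‖ = 0) :
    algo16 δ s p q = (s, p) := by
  simp [algo16, h]

lemma algo16_A_near {δ : ℝ} {p q : Pt} (h0 : ‖q - p‖ ≠ 0) (h : ‖q - p‖ < δ/2) :
    algo16 δ .A p q = (.A, p + (1 - δ/(2*‖q - p‖)) • (q - p)) := by
  simp [algo16, h0, h]

lemma algo16_A_mid {δ : ℝ} {p q : Pt} (h0 : ‖q - p‖ ≠ 0) (h1 : δ/2 ≤ ‖q - p‖)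
    (h2 : ‖q - p‖ < δ) :
    algo16 δ .A p q = (.B, q) := by
  simp [algo16, h0, not_lt.mpr h1, h2]

lemma algo16_A_far {δ : ℝ} (hδ : 0 < δ) {p q : Pt} (h0 : ‖q - p‖ ≠ 0) (h1 : δ ≤ ‖q - p‖) :
    algo16 δ .A p q = (.A, p + (1/2 - δ/(4*‖q - p‖)) • (q - p)) := by
  have ha : ¬ (‖q - p‖ < δ/2) := not_lt.mpr (by linarith)
  have hb : ¬ (‖q - p‖ < δ) := not_lt.mpr h1
  simp [algo16, h0, ha, hb]

lemma algo16_B_mid {δ : ℝ} (hδ : 0 < δ) {p q : Pt} (h1 : δ/2 ≤ ‖q - p‖)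
    (h2 : ‖q - p‖ < δ) :
    algo16 δ .B p q = (.C, p + (1/2 : ℝ) • (q - p)) := by
  have h0 : ‖q - p‖ ≠ 0 := by intro h; rw [h] at h1; linarith
  simp [algo16, h0, h1, h2]

lemma algo16_B_stay {δ : ℝ} {p q : Pt} (h0 : ‖q - p‖ ≠ 0)
    (h : ¬ (δ/2 ≤ ‖q - p‖ ∧ ‖q - p‖ < δ)) :
    algo16 δ .B p q = (.B, p) := by
  simp [algo16, h0, h]

lemma algo16_C {δ : ℝ} {p q : Pt} (h0 : ‖q - p‖ ≠ 0) :
    algo16 δ .C p q = (.C, q) := by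
  simp [algo16, h0]


lemma act_rigid {δ : ℝ} {act : Bool → Bool} {c c' : ConfigFS} (h : StepFS δ act c c')
    {i : Bool} (hi : act i = true) {s' : StABC} {y : Pt}
    (halg : algo16 δ (c.st i) (c.pos i) (c.pos (!i)) = (s', y))
    (hlen : ‖y - c.pos i‖ < δ) :
    c'.st i = s' ∧ c'.pos i = y := by
  obtain ⟨hst, hseg, hstop⟩ := (h i).1 hi
  rw [halg] at hst hseg hstop
  exact ⟨hst, rigid hlen hseg hstop⟩

lemma far_move {δ : ℝ} (hδ : 0 < δ) {act : Bool → Bool} {c c' : ConfigFS}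
    (h : StepFS δ act c c') (i : Bool) (hA : c.st i = .A)
    (hd : δ ≤ ‖c.pos (!i) - c.pos i‖) :
    c'.st i = .A ∧
    ∃ a : ℝ, c'.pos i = c.pos i + a • (c.pos (!i) - c.pos i) ∧
      0 ≤ a ∧ a * ‖c.pos (!i) - c.pos i‖ ≤ ‖c.pos (!i) - c.pos i‖/2 - δ/4 ∧
      (act i = true → δ/4 ≤ a * ‖c.pos (!i) - c.pos i‖) := by
  set p := c.pos i with hp
  set q := c.pos (!i) with hq
  have hd0 : 0 < ‖q - p‖ := lt_of_lt_of_le hδ hd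
  set d := ‖q - p‖ with hdd
  have hv : q - p ≠ 0 := fun h0 => by rw [hdd, h0, norm_zero] at hd0; exact lt_irrefl _ hd0
  have ht0 : 0 ≤ 1/2 - δ/(4*d) := by
    rw [sub_nonneg, div_le_div_iff₀ (by positivity) (by norm_num)]
    linarith
  have htd : (1/2 - δ/(4*d)) * d = d/2 - δ/4 := by
    field_simp
  by_cases hi : act i = true
  · obtain ⟨hst, hseg, hstop⟩ := (h i).1 hi
    rw [hA, algo16_A_far hδ (ne_of_gt hd0) hd] at hst hseg hstop
    obtain ⟨θ, hθ0, hθ1, hx⟩ := seg_char hseg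
    rw [add_sub_cancel_left, smul_smul] at hx
    refine ⟨hst, θ * (1/2 - δ/(4*d)), hx, by positivity, ?_, fun _ => ?_⟩
    · nlinarith
    · rcases hstop with hdest | hfarst
      · -- reached destination: moved distance = d/2 - δ/4 ≥ δ/4
        rw [hx] at hdest
        have : (θ * (1/2 - δ/(4*d))) • (q - p) = (1/2 - δ/(4*d)) • (q - p) := by
          have := hdest
          rwa [add_right_inj] at this
        have hei : θ * (1/2 - δ/(4*d)) = 1/2 - δ/(4*d) := by
          by_contra hne
          exact hne (smul_left_injective ℝ hv this)
        rw [hei, htd]; linarith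
      · rw [hx, add_sub_cancel_left, norm_smul, Real.norm_eq_abs,
          abs_of_nonneg (by positivity)] at hfarst
        linarith
  · have hni := (h i).2 (by simpa using hi)
    refine ⟨hni.2.trans hA, 0, by simp [hni.1, hp], le_refl _, ?_, fun hc => absurd hc hi⟩
    simp only [zero_mul]
    linarith

lemma round_far {δ : ℝ} (hδ : 0 < δ) {act : Bool → Bool} {c c' : ConfigFS}
    (h : StepFS δ act c c') (hone : act false = true ∨ act true = true)
    (hA : c.st false = .A ∧ c.st true = .A)
    (hd : δ ≤ ‖c.pos true - c.pos false‖) :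
    (c'.st false = .A ∧ c'.st true = .A) ∧
    δ/2 ≤ ‖c'.pos true - c'.pos false‖ ∧
    ‖c'.pos true - c'.pos false‖ ≤ ‖c.pos true - c.pos false‖ - δ/4 := by
  have hd0 : 0 < ‖c.pos true - c.pos false‖ := lt_of_lt_of_le hδ hd
  have hrev : ‖c.pos false - c.pos true‖ = ‖c.pos true - c.pos false‖ := norm_sub_rev _ _
  obtain ⟨hstf, a, hxa, ha0, ha1, ha2⟩ := far_move hδ h false hA.1 (by simpa using hd)
  obtain ⟨hstt, b, hxb, hb0, hb1, hb2⟩ := far_move hδ h true hA.2 (by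
    simpa [hrev] using hd)
  simp only [Bool.not_false, Bool.not_true] at hxa hxb ha1 ha2 hb1 hb2
  rw [hrev] at hb1 hb2
  set p := c.pos false
  set q := c.pos true
  set d := ‖q - p‖ with hdd
  have hv' : c'.pos true - c'.pos false = (1 - a - b) • (q - p) := by
    rw [hxb, hxa]; module
  have hab : δ/4 ≤ a * d + b * d := by
    rcases hone with hf | ht
    · have := ha2 hf; nlinarith
    · have := hb2 ht; nlinarith
  have hco : 0 ≤ 1 - a - b := by nlinarith
  have hnorm : ‖c'.pos true - c'.pos false‖ = (1 - a - b) * d := by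
    rw [hv', norm_smul, Real.norm_eq_abs, abs_of_nonneg hco]
  refine ⟨⟨hstf, hstt⟩, ?_, ?_⟩ <;> rw [hnorm] <;> nlinarith

lemma inact {δ : ℝ} {act : Bool → Bool} {c c' : ConfigFS} (h : StepFS δ act c c')
    {i : Bool} (hi : act i = false) : c'.pos i = c.pos i ∧ c'.st i = c.st i :=
  (h i).2 hi

lemma act_stay {δ : ℝ} {act : Bool → Bool} {c c' : ConfigFS} (h : StepFS δ act c c')
    {i : Bool} (hi : act i = true) {s' : StABC}
    (halg : algo16 δ (c.st i) (c.pos i) (c.pos (!i)) = (s', c.pos i)) :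
    c'.st i = s' ∧ c'.pos i = c.pos i := by
  obtain ⟨hst, hseg, _⟩ := (h i).1 hi
  rw [halg] at hst hseg
  rw [segment_same] at hseg
  exact ⟨hst, hseg⟩

lemma round_near {δ : ℝ} (hδ : 0 < δ) {act : Bool → Bool} {c c' : ConfigFS}
    (h : StepFS δ act c c') (hone : act false = true ∨ act true = true)
    (hA : c.st false = .A ∧ c.st true = .A)
    (hd0 : 0 < ‖c.pos true - c.pos false‖) (hd : ‖c.pos true - c.pos false‖ < δ/2) :
    (c'.st false = .A ∧ c'.st true = .A) ∧
    δ/2 ≤ ‖c'.pos true - c'.pos false‖ ∧ ‖c'.pos true - c'.pos false‖ < δ := by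
  set p := c.pos false with hp
  set q := c.pos true with hq
  set d := ‖q - p‖ with hdd
  have hrev : ‖p - q‖ = d := norm_sub_rev _ _
  have hdn : d ≠ 0 := ne_of_gt hd0
  have hlenf : ‖(p + (1 - δ/(2*d)) • (q - p)) - p‖ < δ := by
    rw [add_sub_cancel_left, norm_smul, Real.norm_eq_abs]
    rw [abs_of_nonpos (by rw [sub_nonpos, le_div_iff₀ (by positivity)]; linarith)]
    have : -(1 - δ/(2*d)) * d = δ/2 - d := by field_simp; ring
    rw [this]; linarith
  have hlent : ‖(q + (1 - δ/(2*d)) • (p - q)) - q‖ < δ := by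
    rw [add_sub_cancel_left, norm_smul, Real.norm_eq_abs]
    rw [abs_of_nonpos (by rw [sub_nonpos, le_div_iff₀ (by positivity)]; linarith)]
    have : -(1 - δ/(2*d)) * ‖p - q‖ = δ/2 - d := by rw [hrev]; field_simp; ring
    rw [this]; linarith
  have halgf : algo16 δ (c.st false) (c.pos false) (c.pos (!false)) =
      (.A, p + (1 - δ/(2*d)) • (q - p)) := by
    rw [hA.1]; exact algo16_A_near hdn hd
  have halgt : algo16 δ (c.st true) (c.pos true) (c.pos (!true)) =
      (.A, q + (1 - δ/(2*‖p - q‖)) • (p - q)) := by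
    rw [hA.2]
    exact algo16_A_near (by show ‖p - q‖ ≠ 0; rw [hrev]; exact hdn)
      (by show ‖p - q‖ < δ/2; rw [hrev]; exact hd)
  rw [hrev] at halgt
  cases hf : act false <;> cases ht : act true
  · rcases hone with h1 | h1
    · rw [hf] at h1; exact absurd h1 (by simp)
    · rw [ht] at h1; exact absurd h1 (by simp)
  · -- only true active
    obtain ⟨hpf, hsf⟩ := inact h hf
    obtain ⟨hst1, hpos1⟩ := act_rigid h ht halgt hlent
    have hv' : c'.pos true - c'.pos false = (δ/(2*d)) • (q - p) := by
      rw [hpos1, hpf]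
      have hd' : (δ:ℝ)/(2*d) = 1 - (1 - δ/(2*d)) := by ring
      rw [hd']; module
    have hn : ‖c'.pos true - c'.pos false‖ = δ/2 := by
      rw [hv', norm_smul, Real.norm_eq_abs, abs_of_nonneg (by positivity), ← hdd]
      field_simp
    refine ⟨⟨hsf.trans hA.1, hst1⟩, by rw [hn], by rw [hn]; linarith⟩
  · -- only false active
    obtain ⟨hpt, hst'⟩ := inact h ht
    obtain ⟨hst1, hpos1⟩ := act_rigid h hf halgf hlenf
    have hv' : c'.pos true - c'.pos false = (δ/(2*d)) • (q - p) := by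
      rw [hpt, hpos1]
      have hd' : (δ:ℝ)/(2*d) = 1 - (1 - δ/(2*d)) := by ring
      rw [hd']; module
    have hn : ‖c'.pos true - c'.pos false‖ = δ/2 := by
      rw [hv', norm_smul, Real.norm_eq_abs, abs_of_nonneg (by positivity), ← hdd]
      field_simp
    refine ⟨⟨hst1, hst'.trans hA.2⟩, by rw [hn], by rw [hn]; linarith⟩
  · -- both active
    obtain ⟨hstf, hposf⟩ := act_rigid h hf halgf hlenf
    obtain ⟨hstt, hpost⟩ := act_rigid h ht halgt hlent
    have hv' : c'.pos true - c'.pos false = (δ/d - 1) • (q - p) := by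
      rw [hposf, hpost]
      have hd' : (δ:ℝ)/d - 1 = 1 - (1 - δ/(2*d)) - (1 - δ/(2*d)) := by
        field_simp; ring
      rw [hd']; module
    have hco : 0 ≤ δ/d - 1 := by
      rw [sub_nonneg, le_div_iff₀ hd0]; linarith
    have hn : ‖c'.pos true - c'.pos false‖ = δ - d := by
      rw [hv', norm_smul, Real.norm_eq_abs, abs_of_nonneg hco, ← hdd]
      field_simp
    refine ⟨⟨hstf, hstt⟩, by rw [hn]; linarith, by rw [hn]; linarith⟩

lemma round_mid {δ : ℝ} (hδ : 0 < δ) {act : Bool → Bool} {c c' : ConfigFS}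
    (h : StepFS δ act c c') (hone : act false = true ∨ act true = true)
    (hA : c.st false = .A ∧ c.st true = .A)
    (hd1 : δ/2 ≤ ‖c.pos true - c.pos false‖) (hd2 : ‖c.pos true - c.pos false‖ < δ) :
    c'.pos true = c'.pos false ∨
    ((c'.st false = .B ∧ c'.st true = .B) ∧
      c'.pos false = c.pos true ∧ c'.pos true = c.pos false) := by
  have hrev : ‖c.pos false - c.pos true‖ = ‖c.pos true - c.pos false‖ := norm_sub_rev _ _
  have hdn : ‖c.pos true - c.pos false‖ ≠ 0 := by intro h0; rw [h0] at hd1; linarith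
  have halgf : algo16 δ (c.st false) (c.pos false) (c.pos (!false)) = (.B, c.pos true) := by
    rw [hA.1]; exact algo16_A_mid hdn hd1 hd2
  have halgt : algo16 δ (c.st true) (c.pos true) (c.pos (!true)) = (.B, c.pos false) := by
    rw [hA.2]
    exact algo16_A_mid (by show ‖c.pos false - c.pos true‖ ≠ 0; rw [hrev]; exact hdn)
      (by show δ/2 ≤ ‖c.pos false - c.pos true‖; rw [hrev]; exact hd1)
      (by show ‖c.pos false - c.pos true‖ < δ; rw [hrev]; exact hd2)
  cases hf : act false <;> cases ht : act true
  · rcases hone with h1 | h1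
    · rw [hf] at h1; exact absurd h1 (by simp)
    · rw [ht] at h1; exact absurd h1 (by simp)
  · obtain ⟨hpf, _⟩ := inact h hf
    obtain ⟨_, hpos1⟩ := act_rigid h ht halgt (by rw [hrev]; exact hd2)
    exact Or.inl (by rw [hpf, hpos1])
  · obtain ⟨hpt, _⟩ := inact h ht
    obtain ⟨_, hpos1⟩ := act_rigid h hf halgf hd2
    exact Or.inl (by rw [hpt, hpos1])
  · obtain ⟨hstf, hposf⟩ := act_rigid h hf halgf hd2
    obtain ⟨hstt, hpost⟩ := act_rigid h ht halgt (by rw [hrev]; exact hd2)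
    exact Or.inr ⟨⟨hstf, hstt⟩, hposf, hpost⟩

lemma round_BB {δ : ℝ} (hδ : 0 < δ) {act : Bool → Bool} {c c' : ConfigFS}
    (h : StepFS δ act c c') (hone : act false = true ∨ act true = true)
    (hB : c.st false = .B ∧ c.st true = .B)
    (hd1 : δ/2 ≤ ‖c.pos true - c.pos false‖) (hd2 : ‖c.pos true - c.pos false‖ < δ) :
    c'.pos true = c'.pos false ∨
    (∃ i, c'.st i = .C ∧ c'.st (!i) = .B ∧
      c'.pos true - c'.pos false = (1/2 : ℝ) • (c.pos true - c.pos false)) := by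
  have hrev : ‖c.pos false - c.pos true‖ = ‖c.pos true - c.pos false‖ := norm_sub_rev _ _
  have hdn : ‖c.pos true - c.pos false‖ ≠ 0 := by intro h0; rw [h0] at hd1; linarith
  have hd0 : 0 < ‖c.pos true - c.pos false‖ := lt_of_le_of_ne (norm_nonneg _) (Ne.symm hdn)
  have halgf : algo16 δ (c.st false) (c.pos false) (c.pos (!false)) =
      (.C, c.pos false + (1/2 : ℝ) • (c.pos true - c.pos false)) := by
    rw [hB.1]; exact algo16_B_mid hδ hd1 hd2
  have halgt : algo16 δ (c.st true) (c.pos true) (c.pos (!true)) =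
      (.C, c.pos true + (1/2 : ℝ) • (c.pos false - c.pos true)) := by
    rw [hB.2]
    exact algo16_B_mid hδ (by show δ/2 ≤ ‖c.pos false - c.pos true‖; rw [hrev]; exact hd1)
      (by show ‖c.pos false - c.pos true‖ < δ; rw [hrev]; exact hd2)
  have hlenf : ‖(c.pos false + (1/2 : ℝ) • (c.pos true - c.pos false)) - c.pos false‖ < δ := by
    rw [add_sub_cancel_left, norm_smul, Real.norm_eq_abs]
    rw [abs_of_nonneg (by norm_num)]
    linarith
  have hlent : ‖(c.pos true + (1/2 : ℝ) • (c.pos false - c.pos true)) - c.pos true‖ < δ := by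
    rw [add_sub_cancel_left, norm_smul, Real.norm_eq_abs, hrev]
    rw [abs_of_nonneg (by norm_num)]
    linarith
  cases hf : act false <;> cases ht : act true
  · rcases hone with h1 | h1
    · rw [hf] at h1; exact absurd h1 (by simp)
    · rw [ht] at h1; exact absurd h1 (by simp)
  · -- only true active: true becomes C at midpoint
    obtain ⟨hpf, hsf⟩ := inact h hf
    obtain ⟨hst1, hpos1⟩ := act_rigid h ht halgt hlent
    refine Or.inr ⟨true, hst1, by simpa [Bool.not_true] using hsf.trans hB.1, ?_⟩
    rw [hpos1, hpf]; module
  · -- only false active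
    obtain ⟨hpt, hst'⟩ := inact h ht
    obtain ⟨hst1, hpos1⟩ := act_rigid h hf halgf hlenf
    refine Or.inr ⟨false, hst1, by simpa [Bool.not_false] using hst'.trans hB.2, ?_⟩
    rw [hpt, hpos1]; module
  · -- both active: both reach midpoint
    obtain ⟨_, hposf⟩ := act_rigid h hf halgf hlenf
    obtain ⟨_, hpost⟩ := act_rigid h ht halgt hlent
    refine Or.inl ?_
    rw [hposf, hpost]; module

lemma round_CB_act {δ : ℝ} (hδ : 0 < δ) {act : Bool → Bool} {c c' : ConfigFS}
    (h : StepFS δ act c c') {i : Bool}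
    (hC : c.st i = .C) (hB : c.st (!i) = .B) (hi : act i = true)
    (hd0 : 0 < ‖c.pos (!i) - c.pos i‖) (hd : ‖c.pos (!i) - c.pos i‖ < δ/2) :
    c'.pos i = c'.pos (!i) := by
  have halg : algo16 δ (c.st i) (c.pos i) (c.pos (!i)) = (.C, c.pos (!i)) := by
    rw [hC]; exact algo16_C (ne_of_gt hd0)
  obtain ⟨_, hpos⟩ := act_rigid h hi halg (by linarith)
  have hother : c'.pos (!i) = c.pos (!i) := by
    cases hj : act (!i)
    · exact (inact h hj).1
    · have halgB : algo16 δ (c.st (!i)) (c.pos (!i)) (c.pos (! !i)) = (.B, c.pos (!i)) := by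
        rw [hB, Bool.not_not]
        exact algo16_B_stay (by rw [norm_sub_rev]; exact ne_of_gt hd0)
          (by rw [norm_sub_rev]; push_neg; intro h1; linarith)
      exact (act_stay h hj halgB).2
  rw [hpos, hother]

lemma round_CB_stay {δ : ℝ} (hδ : 0 < δ) {act : Bool → Bool} {c c' : ConfigFS}
    (h : StepFS δ act c c') {i : Bool}
    (hC : c.st i = .C) (hB : c.st (!i) = .B) (hi : act i = false)
    (hd0 : 0 < ‖c.pos (!i) - c.pos i‖) (hd : ‖c.pos (!i) - c.pos i‖ < δ/2) :
    c'.pos i = c.pos i ∧ c'.pos (!i) = c.pos (!i) ∧ c'.st i = .C ∧ c'.st (!i) = .B := by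
  obtain ⟨hp, hs⟩ := inact h hi
  cases hj : act (!i)
  · obtain ⟨hp', hs'⟩ := inact h hj
    exact ⟨hp, hp', hs.trans hC, hs'.trans hB⟩
  · have halgB : algo16 δ (c.st (!i)) (c.pos (!i)) (c.pos (! !i)) = (.B, c.pos (!i)) := by
      rw [hB, Bool.not_not]
      exact algo16_B_stay (by rw [norm_sub_rev]; exact ne_of_gt hd0)
        (by rw [norm_sub_rev]; push_neg; intro h1; linarith)
    obtain ⟨hs', hp'⟩ := act_stay h hj halgB
    exact ⟨hp, hp', hs.trans hC, hs'⟩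

section run

variable {δ : ℝ} {exec : ℕ → ConfigFS} {sched : ℕ → Bool → Bool}

lemma phaseA (hδ : 0 < δ) (hone : ∀ n, sched n false = true ∨ sched n true = true)
    (hstep : ∀ n, StepFS δ (sched n) (exec n) (exec (n + 1))) :
    ∀ (k n : ℕ), (exec n).st false = .A → (exec n).st true = .A →
      ‖(exec n).pos true - (exec n).pos false‖ < δ + δ/4 * (k : ℝ) →
      ∃ m, n ≤ m ∧ (exec m).st false = .A ∧ (exec m).st true = .A ∧
        ‖(exec m).pos true - (exec m).pos false‖ < δ := by
  intro k
  induction k with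
  | zero => intro n h1 h2 h3; exact ⟨n, le_refl n, h1, h2, by simpa using h3⟩
  | succ k ih =>
    intro n h1 h2 h3
    by_cases hlt : ‖(exec n).pos true - (exec n).pos false‖ < δ
    · exact ⟨n, le_refl n, h1, h2, hlt⟩
    · obtain ⟨⟨h1', h2'⟩, _, hupper⟩ :=
        round_far hδ (hstep n) (hone n) ⟨h1, h2⟩ (not_lt.mp hlt)
      obtain ⟨m, hm, hr⟩ := ih (n+1) h1' h2' (by push_cast at h3 ⊢; linarith)
      exact ⟨m, le_trans (Nat.le_succ n) hm, hr⟩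

lemma phaseCB (hδ : 0 < δ) (hone : ∀ n, sched n false = true ∨ sched n true = true)
    (hstep : ∀ n, StepFS δ (sched n) (exec n) (exec (n + 1))) :
    ∀ k n i, (exec n).st i = .C → (exec n).st (!i) = .B →
      0 < ‖(exec n).pos (!i) - (exec n).pos i‖ →
      ‖(exec n).pos (!i) - (exec n).pos i‖ < δ/2 →
      (∃ m, n ≤ m ∧ m ≤ n + k ∧ sched m i = true) →
      ∃ m, (exec m).pos true = (exec m).pos false := by
  intro k
  induction k with
  | zero =>
    intro n i hC hB hd0 hd ⟨m, hnm, hmn, hact⟩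
    have : m = n := le_antisymm (by simpa using hmn) hnm
    subst this
    have := round_CB_act hδ (hstep m) hC hB hact hd0 hd
    refine ⟨m + 1, ?_⟩
    cases i
    · exact this.symm
    · simpa using this
  | succ k ih =>
    intro n i hC hB hd0 hd ⟨m, hnm, hmn, hact⟩
    cases hi : sched n i
    · obtain ⟨hp, hp', hs, hs'⟩ := round_CB_stay hδ (hstep n) hC hB hi hd0 hd
      have hmn' : n + 1 ≤ m := by
        rcases Nat.lt_or_ge n m with h | h
        · exact h
        · exfalso; have : m = n := le_antisymm (le_trans h (le_refl n)) hnm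
          rw [this, hi] at hact; exact Bool.false_ne_true hact
      exact ih (n+1) i hs hs' (by rw [hp, hp']; exact hd0) (by rw [hp, hp']; exact hd)
        ⟨m, hmn', by omega, hact⟩
    · have := round_CB_act hδ (hstep n) hC hB hi hd0 hd
      refine ⟨n + 1, ?_⟩
      cases i
      · exact this.symm
      · simpa using this

lemma persist (hstep : ∀ n, StepFS δ (sched n) (exec n) (exec (n + 1))) (N : ℕ)
    (heq : (exec N).pos true = (exec N).pos false) :
    ∀ n, N ≤ n → ∀ i, (exec n).pos i = (exec N).pos i := by
  intro n hn
  induction n, hn using Nat.le_induction with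
  | base => intro i; rfl
  | succ n hn ih =>
    have heqn : (exec n).pos true = (exec n).pos false := by
      rw [ih true, ih false, heq]
    intro i
    rw [← ih i]
    have hzero : ‖(exec n).pos (!i) - (exec n).pos i‖ = 0 := by
      cases i <;> simp [heqn]
    cases hi : sched n i
    · exact (inact (hstep n) hi).1
    · exact (act_stay (hstep n) hi (algo16_zero hzero)).2

lemma finishMid (hδ : 0 < δ) (hone : ∀ n, sched n false = true ∨ sched n true = true)
    (hfair2 : ∀ i n, ∃ m, n ≤ m ∧ sched m i = true)
    (hstep : ∀ n, StepFS δ (sched n) (exec n) (exec (n + 1))) (n : ℕ)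
    (h1 : (exec n).st false = .A) (h2 : (exec n).st true = .A)
    (hd1 : δ/2 ≤ ‖(exec n).pos true - (exec n).pos false‖)
    (hd2 : ‖(exec n).pos true - (exec n).pos false‖ < δ) :
    ∃ m, (exec m).pos true = (exec m).pos false := by
  rcases round_mid hδ (hstep n) (hone n) ⟨h1, h2⟩ hd1 hd2 with heq | ⟨⟨hB1, hB2⟩, hpf, hpt⟩
  · exact ⟨n + 1, heq⟩
  · -- both B at n+1, same distance
    have hd1' : δ/2 ≤ ‖(exec (n+1)).pos true - (exec (n+1)).pos false‖ := by
      rw [hpf, hpt, norm_sub_rev]; exact hd1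
    have hd2' : ‖(exec (n+1)).pos true - (exec (n+1)).pos false‖ < δ := by
      rw [hpf, hpt, norm_sub_rev]; exact hd2
    rcases round_BB hδ (hstep (n+1)) (hone (n+1)) ⟨hB1, hB2⟩ hd1' hd2'
      with heq | ⟨i, hC, hB, hv⟩
    · exact ⟨n + 2, heq⟩
    · -- C/B configuration at n+2 with half distance
      have hn2 : ‖(exec (n+2)).pos true - (exec (n+2)).pos false‖
          = (1/2) * ‖(exec (n+1)).pos true - (exec (n+1)).pos false‖ := by
        rw [hv, norm_smul, Real.norm_eq_abs, abs_of_nonneg (by norm_num)]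
      have hgen0 : 0 < ‖(exec (n+2)).pos (!i) - (exec (n+2)).pos i‖ := by
        cases i <;>
          simp only [Bool.not_false, Bool.not_true] <;>
          [skip; rw [norm_sub_rev]] <;> (rw [hn2]; linarith)
      have hgen2 : ‖(exec (n+2)).pos (!i) - (exec (n+2)).pos i‖ < δ/2 := by
        cases i <;>
          simp only [Bool.not_false, Bool.not_true] <;>
          [skip; rw [norm_sub_rev]] <;> (rw [hn2]; linarith)
      obtain ⟨m, hm, hact⟩ := hfair2 i (n+2)
      exact phaseCB hδ hone hstep (m - (n+2)) (n+2) i hC hB hgen0 hgen2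
        ⟨m, hm, by omega, hact⟩

lemma finishAA (hδ : 0 < δ) (hone : ∀ n, sched n false = true ∨ sched n true = true)
    (hfair2 : ∀ i n, ∃ m, n ≤ m ∧ sched m i = true)
    (hstep : ∀ n, StepFS δ (sched n) (exec n) (exec (n + 1))) (n : ℕ)
    (h1 : (exec n).st false = .A) (h2 : (exec n).st true = .A)
    (hd : ‖(exec n).pos true - (exec n).pos false‖ < δ) :
    ∃ m, (exec m).pos true = (exec m).pos false := by
  rcases eq_or_lt_of_le (norm_nonneg ((exec n).pos true - (exec n).pos false))
    with h0 | h0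
  · exact ⟨n, by rwa [eq_comm, norm_eq_zero, sub_eq_zero] at h0⟩
  by_cases hmid : δ/2 ≤ ‖(exec n).pos true - (exec n).pos false‖
  · exact finishMid hδ hone hfair2 hstep n h1 h2 hmid hd
  · obtain ⟨⟨h1', h2'⟩, hd1', hd2'⟩ :=
      round_near hδ (hstep n) (hone n) ⟨h1, h2⟩ h0 (not_le.mp hmid)
    exact finishMid hδ hone hfair2 hstep (n+1) h1' h2' hd1' hd2'

end run
end Rdv

/-- In SSynch with non-rigid movements with parameter `δ > 0`, two
finite-state robots knowing `δ` and running the 3-state algorithm, both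
starting in state `A`, solve Rendezvous from every pair of initial positions,
under every fair schedule and every adversarial choice of stopping points:
Rendezvous of two `FState` robots in non-rigid SSynch with knowledge of `δ`
is solvable with three internal states. -/
theorem rendezvous_fstate_ssynch_nonrigid_3states (δ : ℝ) (hδ : 0 < δ)
    (exec : ℕ → ConfigFS) (sched : ℕ → Bool → Bool) (hfair : FairSched sched)
    (hinit : ∀ i, (exec 0).st i = StABC.A)
    (hstep : ∀ n, StepFS δ (sched n) (exec n) (exec (n + 1))) :
    SolvesFS exec := by
  obtain ⟨hone, hfair2⟩ := hfair
  obtain ⟨k, hk⟩ := exists_nat_gt (‖(exec 0).pos true - (exec 0).pos false‖ / (δ/4))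
  have hklt : ‖(exec 0).pos true - (exec 0).pos false‖ < δ + δ/4 * (k : ℝ) := by
    rw [div_lt_iff₀ (by linarith)] at hk
    linarith
  obtain ⟨m, _, hA1, hA2, hlt⟩ :=
    Rdv.phaseA hδ hone hstep k 0 (hinit false) (hinit true) hklt
  obtain ⟨M, heq⟩ := Rdv.finishAA hδ hone hfair2 hstep m hA1 hA2 hlt
  refine ⟨M, fun n hn i => ?_⟩
  rw [Rdv.persist hstep M heq n hn i]
  cases i
  · rfl
  · exact heq
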